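/- Let A, B be elements of a commutative ring R and ε ∈ {1, −1}. Define w_{−1} = ε, w_0 = 1, and w_{n+1} = A·w_n − B·w_{n−1} for n ≥ 0. Then for every positive integer n, det[w_{|j−k|}]_{1≤j,k≤n} = u_n(1 − (A − εB)^2, B^2·(1 + B − εA)^2). -/

import Mathlib

def lucasU {R : Type*} [CommRing R] (x y : R) : ℕ → R
  | 0 => 0
  | 1 => 1
  | n + 2 => x * lucasU x y (n + 1) - y * lucasU x y n

def lucasV {R : Type*} [CommRing R] (x y : R) : ℕ → R
  | 0 => 2
  | 1 => x
  | n + 2 => x * lucasV x y (n + 1) - y * lucasV x y n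


theorem det_step {R : Type*} [CommRing R] (A B : R) (w : ℤ → R)
    (hrec : ∀ m : ℕ, w ((m : ℤ) + 2) = A * w ((m : ℤ) + 1) - B * w (m : ℤ)) (n : ℕ) :
    Matrix.det (Matrix.of fun j k : Fin (n+3) => w |(j : ℤ) - (k : ℤ)|) =
      ((w 0 - A * w 1 + B * w 2) - A * (w 1 - A * w 0 + B * w 1)) *
        Matrix.det (Matrix.of fun j k : Fin (n+2) => w |(j : ℤ) - (k : ℤ)|) -
      (w 1 - A * w 0 + B * w 1) *
        ((w 1 - A * w 0 + B * w 1) *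
          Matrix.det (Matrix.of fun j k : Fin (n+1) => w |(j : ℤ) - (k : ℤ)|)) := by
  have hr : ∀ p : ℕ, w ((p:ℤ) + 2) + (-A) * w ((p:ℤ)+1) + B * w (p:ℤ) = 0 := fun p => by
    rw [hrec p]; ring
  have h0' : w 2 + (-A) * w 1 + B * w 0 = 0 := by
    have := hr 0; norm_num at this; linear_combination this
  have wc : ∀ (x c : ℤ), |x| = c → w |x| = w c := fun x c h => by rw [h]
  set e := w 1 - A * w 0 + B * w 1 with he
  set t := (w 0 - A * w 1 + B * w 2) - A * e with ht
  set M : Matrix (Fin (n+3)) (Fin (n+3)) R := Matrix.of fun j k => w |(j:ℤ)-(k:ℤ)| with hM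
  set i2 : Fin (n+3) := ⟨n+2, by omega⟩ with hi2
  set i1 : Fin (n+3) := ⟨n+1, by omega⟩ with hi1
  set i0 : Fin (n+3) := ⟨n, by omega⟩ with hi0
  have h21 : i2 ≠ i1 := by simp [hi2, hi1, Fin.ext_iff]
  have h20 : i2 ≠ i0 := by simp [hi2, hi0, Fin.ext_iff]
  have hv2 : (i2 : ℕ) = n+2 := rfl
  have hv1 : (i1 : ℕ) = n+1 := rfl
  have hv0 : (i0 : ℕ) = n := rfl
  set M' : Matrix (Fin (n+3)) (Fin (n+3)) R := Matrix.of fun j k =>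
    if (j:ℕ) = n+2 then (if (k:ℕ) = n+2 then t else if (k:ℕ) = n+1 then e else 0)
    else if (k:ℕ) = n+2 then (if (j:ℕ) = n+1 then e else 0)
    else w |(j:ℤ)-(k:ℤ)| with hM'
  set M1 := M.updateRow i2 (M i2 + (-A) • M i1) with hM1
  set M2 := M1.updateRow i2 (M1 i2 + B • M1 i0) with hM2
  set M3 := M2.updateCol i2 (fun r => M2 r i2 + (-A) • M2 r i1) with hM3
  set M4 := M3.updateCol i2 (fun r => M3 r i2 + B • M3 r i0) with hM4
  have d1 : M1.det = M.det := Matrix.det_updateRow_add_smul_self M h21 (-A)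
  have d2 : M2.det = M1.det := Matrix.det_updateRow_add_smul_self M1 h20 B
  have d3 : M3.det = M2.det := Matrix.det_updateCol_add_smul_self M2 h21 (-A)
  have d4 : M4.det = M3.det := Matrix.det_updateCol_add_smul_self M3 h20 B
  have hM2row : ∀ (j k : Fin (n+3)), M2 j k =
      if j = i2 then (w |(i2:ℤ)-(k:ℤ)| + (-A) * w |(i1:ℤ)-(k:ℤ)| + B * w |(i0:ℤ)-(k:ℤ)|)
      else w |(j:ℤ)-(k:ℤ)| := by
    intro j k
    by_cases h : j = i2 <;>
      simp [hM2, hM1, Matrix.updateRow_apply, h, h21.symm, h20.symm, hM, smul_eq_mul]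
  have hM4entry : ∀ (j k : Fin (n+3)), M4 j k =
      if k = i2 then (M2 j i2 + (-A) * M2 j i1 + B * M2 j i0) else M2 j k := by
    intro j k
    by_cases h : k = i2 <;>
      simp [hM4, hM3, Matrix.updateCol_apply, h, h21.symm, h20.symm, smul_eq_mul]
  have hME : M4 = M' := by
    ext j k
    rw [hM4entry]
    by_cases hk : k = i2
    · subst hk
      rw [if_pos rfl, hM2row, hM2row, hM2row]
      by_cases hj : j = i2
      · subst hj
        rw [if_pos rfl, if_pos rfl, if_pos rfl]
        have hR : M' i2 i2 = t := by simp [hM', hv2]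
        rw [hR, wc ((i2:ℤ) - (i2:ℤ)) 0 (by rw [Int.abs_eq_natAbs]; omega),
            wc ((i1:ℤ) - (i2:ℤ)) 1 (by rw [Int.abs_eq_natAbs]; omega),
            wc ((i0:ℤ) - (i2:ℤ)) 2 (by rw [Int.abs_eq_natAbs]; omega),
            wc ((i2:ℤ) - (i1:ℤ)) 1 (by rw [Int.abs_eq_natAbs]; omega),
            wc ((i1:ℤ) - (i1:ℤ)) 0 (by rw [Int.abs_eq_natAbs]; omega),
            wc ((i0:ℤ) - (i1:ℤ)) 1 (by rw [Int.abs_eq_natAbs]; omega),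
            wc ((i2:ℤ) - (i0:ℤ)) 2 (by rw [Int.abs_eq_natAbs]; omega),
            wc ((i1:ℤ) - (i0:ℤ)) 1 (by rw [Int.abs_eq_natAbs]; omega),
            wc ((i0:ℤ) - (i0:ℤ)) 0 (by rw [Int.abs_eq_natAbs]; omega)]
        rw [ht, he]; linear_combination B * h0'
      · rw [if_neg hj, if_neg hj, if_neg hj]
        have hjv : (j:ℕ) ≠ n+2 := fun h => hj (by simp [hi2, Fin.ext_iff, h])
        by_cases hj1 : (j:ℕ) = n+1
        · have hR : M' j i2 = e := by simp [hM', hjv, hj1, hv2]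
          rw [hR,
              wc ((j:ℤ) - (i2:ℤ)) 1 (by rw [Int.abs_eq_natAbs]; omega),
              wc ((j:ℤ) - (i1:ℤ)) 0 (by rw [Int.abs_eq_natAbs]; omega),
              wc ((j:ℤ) - (i0:ℤ)) 1 (by rw [Int.abs_eq_natAbs]; omega), he]
          ring
        · have hR : M' j i2 = 0 := by simp [hM', hjv, hj1, hv2]
          have hjn : (j:ℕ) ≤ n := by have := j.isLt; omega
          rw [hR, wc ((j:ℤ) - (i2:ℤ)) (((n - (j:ℕ) : ℕ):ℤ) + 2) (by rw [Int.abs_eq_natAbs]; omega),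
              wc ((j:ℤ) - (i1:ℤ)) (((n - (j:ℕ) : ℕ):ℤ) + 1) (by rw [Int.abs_eq_natAbs]; omega),
              wc ((j:ℤ) - (i0:ℤ)) (((n - (j:ℕ) : ℕ):ℤ)) (by rw [Int.abs_eq_natAbs]; omega)]
          linear_combination hr (n - (j:ℕ))
    · rw [if_neg hk, hM2row]
      have hkv : (k:ℕ) ≠ n+2 := fun h => hk (by simp [hi2, Fin.ext_iff, h])
      by_cases hj : j = i2
      · subst hj
        rw [if_pos rfl]
        by_cases hk1 : (k:ℕ) = n+1
        · have hR : M' i2 k = e := by simp [hM', hkv, hk1, hv2]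
          rw [hR,
              wc ((i2:ℤ) - (k:ℤ)) 1 (by rw [Int.abs_eq_natAbs]; omega),
              wc ((i1:ℤ) - (k:ℤ)) 0 (by rw [Int.abs_eq_natAbs]; omega),
              wc ((i0:ℤ) - (k:ℤ)) 1 (by rw [Int.abs_eq_natAbs]; omega), he]
          ring
        · have hR : M' i2 k = 0 := by simp [hM', hkv, hk1, hv2]
          have hkn : (k:ℕ) ≤ n := by have := k.isLt; omega
          rw [hR, wc ((i2:ℤ) - (k:ℤ)) (((n - (k:ℕ) : ℕ):ℤ) + 2) (by rw [Int.abs_eq_natAbs]; omega),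
              wc ((i1:ℤ) - (k:ℤ)) (((n - (k:ℕ) : ℕ):ℤ) + 1) (by rw [Int.abs_eq_natAbs]; omega),
              wc ((i0:ℤ) - (k:ℤ)) (((n - (k:ℕ) : ℕ):ℤ)) (by rw [Int.abs_eq_natAbs]; omega)]
          linear_combination hr (n - (k:ℕ))
      · rw [if_neg hj]
        have hjv : (j:ℕ) ≠ n+2 := fun h => hj (by simp [hi2, Fin.ext_iff, h])
        simp only [hM', Matrix.of_apply, if_neg hjv, if_neg hkv]
  -- determinant computation
  rw [← d1, ← d2, ← d3, ← d4, hME]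
  have hi12 : i1 ≠ i2 := Ne.symm h21
  have hsa2 : i2.succAbove = (Fin.castSucc : Fin (n+2) → Fin (n+3)) := Fin.succAbove_last
  have hsub2 : M'.submatrix Fin.castSucc Fin.castSucc =
      (Matrix.of fun j k : Fin (n+2) => w |(j:ℤ)-(k:ℤ)|) := by
    ext j k
    have hj : (j:ℕ) < n+2 := j.isLt
    have hk : (k:ℕ) < n+2 := k.isLt
    simp only [Matrix.submatrix_apply, hM', Matrix.of_apply, Fin.coe_castSucc]
    split_ifs <;> first | rfl | (exfalso; omega)
  have hM'tt : M' i2 i2 = t := by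
    simp only [hM', Matrix.of_apply, hv2]
    split_ifs <;> first | rfl | (exfalso; omega)
  have he1 : M' i2 i1 = e := by
    simp only [hM', Matrix.of_apply, hv2, hv1]
    split_ifs <;> first | rfl | (exfalso; omega)
  have hsa1 : i1.succAbove (Fin.last (n+1)) = i2 := by
    rw [Fin.succAbove_of_le_castSucc _ _ (by rw [Fin.le_def]; simp [hi1])]
    exact Fin.ext rfl
  have hminor : (M'.submatrix Fin.castSucc i1.succAbove).det =
      e * (Matrix.of fun j k : Fin (n+1) => w |(j:ℤ)-(k:ℤ)|).det := by
    rw [Matrix.det_succ_column _ (Fin.last (n+1)),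
        Finset.sum_eq_single_of_mem (Fin.last (n+1)) (Finset.mem_univ _) (by
          intro i _ hne
          have hiv : (i:ℕ) ≠ n+1 := by
            intro h; exact hne (Fin.ext (by simp [h]))
          have hi' : (i:ℕ) < n+2 := i.isLt
          have hz : (M'.submatrix Fin.castSucc i1.succAbove) i (Fin.last (n+1)) = 0 := by
            simp only [Matrix.submatrix_apply, hsa1, hM', Matrix.of_apply, hv2,
              Fin.coe_castSucc]
            split_ifs <;> first | rfl | (exfalso; omega)
          rw [hz]; ring)]
    have hentry : (M'.submatrix Fin.castSucc i1.succAbove) (Fin.last (n+1)) (Fin.last (n+1)) = e := by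
      simp only [Matrix.submatrix_apply, hsa1, hM', Matrix.of_apply, hv2, Fin.coe_castSucc,
        Fin.val_last]
      split_ifs <;> first | rfl | (exfalso; omega)
    rw [hentry, Matrix.submatrix_submatrix, Fin.succAbove_last]
    have hsub1 : M'.submatrix (Fin.castSucc ∘ Fin.castSucc) (i1.succAbove ∘ Fin.castSucc) =
        (Matrix.of fun j k : Fin (n+1) => w |(j:ℤ)-(k:ℤ)|) := by
      ext j k
      have hj : (j:ℕ) < n+1 := j.isLt
      have hk : (k:ℕ) < n+1 := k.isLt
      have hcol : i1.succAbove (Fin.castSucc k) = Fin.castSucc (Fin.castSucc k) :=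
        Fin.succAbove_of_castSucc_lt _ _ (by rw [Fin.lt_def]; simp [hi1]; omega)
      simp only [Matrix.submatrix_apply, Function.comp_apply, hcol, hM', Matrix.of_apply,
        Fin.coe_castSucc]
      split_ifs <;> first | rfl | (exfalso; omega)
    rw [hsub1, Fin.val_last]
    rw [show ((-1 : R) ^ (n+1+(n+1)) = 1) from Even.neg_one_pow ⟨n+1, by ring⟩]
    ring
  have hzero : ∀ b : Fin (n+3), b ≠ i1 → b ≠ i2 →
      (-1 : R) ^ ((i2:ℕ) + (b:ℕ)) * M' i2 b * (M'.submatrix i2.succAbove b.succAbove).det = 0 := by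
    intro b hb1 hb2
    have hbv1 : (b:ℕ) ≠ n+1 := fun h => hb1 (by simp [hi1, Fin.ext_iff, h])
    have hbv2 : (b:ℕ) ≠ n+2 := fun h => hb2 (by simp [hi2, Fin.ext_iff, h])
    have : M' i2 b = 0 := by
      simp only [hM', Matrix.of_apply, hv2]
      split_ifs <;> first | rfl | (exfalso; omega)
    rw [this]; ring
  have hsplit : ∀ f : Fin (n+3) → R, (∀ b, b ≠ i1 → b ≠ i2 → f b = 0) →
      ∑ k, f k = f i1 + f i2 := by
    intro f hf
    rw [← Finset.sum_subset (Finset.subset_univ ({i1, i2} : Finset (Fin (n+3))))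
        (fun x _ hx => by
          simp only [Finset.mem_insert, Finset.mem_singleton, not_or] at hx
          exact hf x hx.1 hx.2)]
    exact Finset.sum_pair hi12
  rw [Matrix.det_succ_row M' i2, hsplit _ hzero]
  simp only [hv2, hv1]
  rw [hM'tt, he1, hsa2, hsub2, hminor]
  rw [show ((-1 : R) ^ (n+2+(n+2)) = 1) from Even.neg_one_pow ⟨n+2, by ring⟩,
      show ((-1 : R) ^ (n+2+(n+1)) = -1) from Odd.neg_one_pow ⟨n+1, by ring⟩]
  ring

theorem stmt_11 {R : Type*} [CommRing R] (A B ε : R) (hε : ε = 1 ∨ ε = -1)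
    (w : ℤ → R) (hm : w (-1) = ε) (h0 : w 0 = 1)
    (hw : ∀ m : ℕ, w ((m : ℤ) + 1) = A * w m - B * w ((m : ℤ) - 1))
    (n : ℕ) (hn : 0 < n) :
    Matrix.det (Matrix.of fun j k : Fin n => w |(j : ℤ) - (k : ℤ)|) =
      lucasU (1 - (A - ε * B) ^ 2) (B ^ 2 * (1 + B - ε * A) ^ 2) n := by
  have hw1 : w 1 = A * w 0 - B * w (-1) := by have := hw 0; norm_num at this; exact this
  have hw2 : w 2 = A * w 1 - B * w 0 := by have := hw 1; norm_num at this; exact this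
  have hrec : ∀ m : ℕ, w ((m : ℤ) + 2) = A * w ((m : ℤ) + 1) - B * w (m : ℤ) := by
    intro m
    have h' := hw (m+1)
    push_cast at h'
    rw [show (m:ℤ)+1+1 = (m:ℤ)+2 by ring, show (m:ℤ)+1-1 = (m:ℤ) by ring] at h'
    exact h'
  obtain ⟨n', rfl⟩ : ∃ n', n = n' + 1 := ⟨n-1, by omega⟩
  clear hn
  suffices H : ∀ m : ℕ,
      Matrix.det (Matrix.of fun j k : Fin (m+1) => w |(j : ℤ) - (k : ℤ)|) =
        lucasU (1 - (A - ε * B) ^ 2) (B ^ 2 * (1 + B - ε * A) ^ 2) (m+1) ∧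
      Matrix.det (Matrix.of fun j k : Fin (m+2) => w |(j : ℤ) - (k : ℤ)|) =
        lucasU (1 - (A - ε * B) ^ 2) (B ^ 2 * (1 + B - ε * A) ^ 2) (m+2) by
    exact (H n').1
  intro m
  induction m with
  | zero =>
    constructor
    · rw [Matrix.det_fin_one]
      simp only [Matrix.of_apply]
      norm_num [lucasU, h0]
    · rw [Matrix.det_fin_two]
      simp only [Matrix.of_apply]
      have e01 : |((0 : Fin 2) : ℤ) - ((1 : Fin 2) : ℤ)| = 1 := by decide
      have e10 : |((1 : Fin 2) : ℤ) - ((0 : Fin 2) : ℤ)| = 1 := by decide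
      have e00 : |((0 : Fin 2) : ℤ) - ((0 : Fin 2) : ℤ)| = 0 := by decide
      have e11 : |((1 : Fin 2) : ℤ) - ((1 : Fin 2) : ℤ)| = 0 := by decide
      rw [e01, e10, e00, e11, h0, hw1, h0, hm]
      show _ = (1 - (A - ε * B) ^ 2) * lucasU _ _ 1 - (B ^ 2 * (1 + B - ε * A) ^ 2) * lucasU _ _ 0
      rw [show lucasU (1 - (A - ε * B) ^ 2) (B ^ 2 * (1 + B - ε * A) ^ 2) 1 = 1 from rfl,
          show lucasU (1 - (A - ε * B) ^ 2) (B ^ 2 * (1 + B - ε * A) ^ 2) 0 = 0 from rfl]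
      rcases hε with h | h <;> subst h <;> ring
  | succ i ih =>
    refine ⟨ih.2, ?_⟩
    show Matrix.det (Matrix.of fun j k : Fin (i+3) => w |(j : ℤ) - (k : ℤ)|) =
      lucasU (1 - (A - ε * B) ^ 2) (B ^ 2 * (1 + B - ε * A) ^ 2) (i+3)
    rw [det_step A B w hrec i, ih.1, ih.2]
    show _ = (1 - (A - ε * B) ^ 2) * lucasU _ _ (i+2) - (B ^ 2 * (1 + B - ε * A) ^ 2) * lucasU _ _ (i+1)
    rw [hw2, hw1, h0, hm]
    rcases hε with h | h <;> subst h <;> ring
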